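/- Let d ≥ 2 and let x = (x₁,...,x_d) be a probability vector (xᵢ ≥ 0, ∑xᵢ = 1) with fixed purity ∑xᵢ² = γ where 1/d ≤ γ ≤ 1. Then the Shannon entropy H(x) = -∑ xᵢ log xᵢ is maximized by the vector with x₁ = 1/d + √((d-1)/d · (γ - 1/d)) and x₂ = ... = x_d = (1 - x₁)/(d-1). -/

import Mathlib

set_option maxHeartbeats 1000000

open Real Set

lemma key_ineq {a b : ℝ} (hb : 0 < b) (hba : b < a) (t : ℝ) (ht0 : 0 ≤ t) (hta : t ≤ a) :
    -(t * Real.log t) ≤ -(t * Real.log b) - t + b -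
      ((a * Real.log a - a * Real.log b - a + b) / (a - b) ^ 2) * (t - b) ^ 2 := by
  have ha : (0:ℝ) < a := hb.trans hba
  set C : ℝ := (a * Real.log a - a * Real.log b - a + b) / (a - b) ^ 2 with hC
  have hab2 : ((a - b) ^ 2 : ℝ) ≠ 0 := pow_ne_zero _ (sub_ne_zero.mpr (ne_of_gt hba))
  have hab2' : (0:ℝ) < (a - b) ^ 2 := by positivity
  have hCval : C * (a - b) ^ 2 = a * Real.log a - a * Real.log b - a + b := by
    rw [hC, div_mul_cancel₀ _ hab2]
  -- log a - log b ≤ (a-b)/b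
  have hlogab : (Real.log a - Real.log b) * b ≤ a - b := by
    have h := Real.log_le_sub_one_of_pos (show (0:ℝ) < a / b by positivity)
    rw [Real.log_div (ne_of_gt ha) (ne_of_gt hb)] at h
    have h2 : a / b * b = a := div_mul_cancel₀ a (ne_of_gt hb)
    nlinarith [mul_le_mul_of_nonneg_right h hb.le]
  have hCb : C * b ^ 2 ≤ b := by
    have hNb : (a * Real.log a - a * Real.log b - a + b) * b ≤ (a - b) ^ 2 := by
      nlinarith [mul_le_mul_of_nonneg_left hlogab ha.le]
    rw [hC, div_mul_eq_mul_div, div_le_iff₀ hab2']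
    nlinarith [mul_le_mul_of_nonneg_right hNb hb.le]
  rcases eq_or_lt_of_le ht0 with h0 | htpos
  · -- t = 0
    rw [← h0]
    simp only [Real.log_zero, mul_zero, zero_mul, neg_zero, mul_zero, zero_sub, neg_zero]
    nlinarith [hCb]
  -- t > 0
  set Q : ℝ → ℝ := fun u => u * Real.log u - u * Real.log b - u + b - C * (u - b) ^ 2 with hQ
  have hderiv : ∀ u : ℝ, 0 < u →
      HasDerivAt Q (Real.log u - Real.log b - 2 * C * (u - b)) u := by
    intro u hu
    have h1 := Real.hasDerivAt_mul_log (ne_of_gt hu)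
    have h2 : HasDerivAt (fun x : ℝ => x * Real.log b) (Real.log b) u := by
      simpa using (hasDerivAt_id u).mul_const (Real.log b)
    have h3 : HasDerivAt (fun x : ℝ => C * (x - b) ^ 2) (C * (2 * (u - b))) u := by
      have h4 : HasDerivAt (fun x : ℝ => x - b) 1 u := (hasDerivAt_id u).sub_const b
      simpa using (h4.pow 2).const_mul C
    have := (((h1.sub h2).sub (hasDerivAt_id u)).add_const b).sub h3
    rw [show Real.log u - Real.log b - 2 * C * (u - b) = Real.log u + 1 - Real.log b - 1 - C * (2 * (u - b)) by ring]
    exact this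
  have hQb : Q b = 0 := by simp only [hQ]; ring
  have hQa : Q a = 0 := by simp only [hQ]; linarith [hCval]
  have hcont : ContinuousOn Q (Icc b a) := fun u hu =>
    ((hderiv u (lt_of_lt_of_le hb hu.1)).continuousAt).continuousWithinAt
  obtain ⟨c, hc, hc0⟩ := exists_hasDerivAt_eq_zero hba hcont (hQb.trans hQa.symm)
    (fun u hu => hderiv u (hb.trans hu.1))
  have hcpos : (0:ℝ) < c := hb.trans hc.1
  -- concavity helper
  have hconc : ∀ u v w p q : ℝ, 0 < u → 0 < v → 0 < w → 0 ≤ p → 0 ≤ q → p + q = 1 →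
      w = p * u + q * v →
      p * (Real.log u - Real.log b - 2 * C * (u - b)) +
        q * (Real.log v - Real.log b - 2 * C * (v - b)) ≤
      Real.log w - Real.log b - 2 * C * (w - b) := by
    intro u v w p q hu hv hw hp hq hpq hw'
    have hl := strictConcaveOn_log_Ioi.concaveOn.2 (Set.mem_Ioi.mpr hu) (Set.mem_Ioi.mpr hv) hp hq hpq
    simp only [smul_eq_mul] at hl
    have hq' : q = 1 - p := by linarith
    subst hq' hw'
    nlinarith [hl]
  have hbc : b < c := hc.1
  have hcb : c - b ≠ 0 := by intro h; linarith [hc.1]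
  have hmid : ∀ u, b ≤ u → u ≤ c → 0 ≤ Real.log u - Real.log b - 2 * C * (u - b) := by
    intro u h1 h2
    have hupos : 0 < u := lt_of_lt_of_le hb h1
    have h := hconc b c u ((c - u) / (c - b)) ((u - b) / (c - b)) hb hcpos hupos
      (div_nonneg (by linarith) (by linarith)) (div_nonneg (by linarith) (by linarith))
      (by rw [← add_div]; field_simp; ring)
      (by field_simp; ring)
    have e1 : (c - u) / (c - b) * (Real.log b - Real.log b - 2 * C * (b - b)) = 0 := by ring
    have e2 : (u - b) / (c - b) * (Real.log c - Real.log b - 2 * C * (c - b)) = 0 := by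
      rw [hc0, mul_zero]
    linarith [h, e1, e2]
  have hlo : ∀ u, 0 < u → u ≤ b → Real.log u - Real.log b - 2 * C * (u - b) ≤ 0 := by
    intro u hu h1
    rcases eq_or_lt_of_le h1 with rfl | h1
    · simp
    · have huc : u < c := h1.trans hbc
      have hcu : c - u ≠ 0 := by intro h; linarith
      have hp : (0:ℝ) < (c - b) / (c - u) := div_pos (by linarith) (by linarith)
      have h := hconc u c b ((c - b) / (c - u)) ((b - u) / (c - u)) hu hcpos hb
        hp.le (div_nonneg (by linarith) (by linarith))
        (by rw [← add_div]; field_simp; ring)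
        (by field_simp; ring)
      have e2 : (b - u) / (c - u) * (Real.log c - Real.log b - 2 * C * (c - b)) = 0 := by
        rw [hc0, mul_zero]
      have e3 : Real.log b - Real.log b - 2 * C * (b - b) = 0 := by ring
      by_contra hgt
      push_neg at hgt
      nlinarith [mul_pos hp hgt]
  have hhi : ∀ u, c ≤ u → Real.log u - Real.log b - 2 * C * (u - b) ≤ 0 := by
    intro u h1
    rcases eq_or_lt_of_le h1 with rfl | h1
    · linarith [hc0]
    · have hupos : 0 < u := hcpos.trans h1
      have hub : u - b ≠ 0 := by intro h; linarith
      have hq : (0:ℝ) < (c - b) / (u - b) := div_pos (by linarith) (by linarith)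
      have h := hconc b u c ((u - c) / (u - b)) ((c - b) / (u - b)) hb hupos hcpos
        (div_nonneg (by linarith) (by linarith)) hq.le
        (by rw [← add_div]; field_simp; ring)
        (by field_simp; ring)
      have e1 : Real.log b - Real.log b - 2 * C * (b - b) = 0 := by ring
      by_contra hgt
      push_neg at hgt
      nlinarith [mul_pos hq hgt, hc0, h, mul_nonneg (div_nonneg (show (0:ℝ) ≤ u - c by linarith) (show (0:ℝ) ≤ u - b by linarith)) (le_of_eq e1.symm)]
  -- now get 0 ≤ Q t
  have hQt : 0 ≤ Q t := by
    rcases le_total t b with htb | hbt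
    · -- antitone on [t, b]
      have hanti : AntitoneOn Q (Icc t b) := by
        apply antitoneOn_of_deriv_nonpos (convex_Icc t b)
        · exact fun u hu => ((hderiv u (lt_of_lt_of_le htpos hu.1)).continuousAt).continuousWithinAt
        · intro u hu
          rw [interior_Icc] at hu
          exact ((hderiv u (htpos.trans hu.1)).differentiableAt).differentiableWithinAt
        · intro u hu
          rw [interior_Icc] at hu
          rw [(hderiv u (htpos.trans hu.1)).deriv]
          exact hlo u (htpos.trans hu.1) hu.2.le
      have := hanti (Set.left_mem_Icc.mpr htb) (Set.right_mem_Icc.mpr htb) htb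
      rw [hQb] at this; exact this
    · rcases le_total t c with htc | hct
      · have hmono : MonotoneOn Q (Icc b c) := by
          apply monotoneOn_of_deriv_nonneg (convex_Icc b c)
          · exact fun u hu => ((hderiv u (lt_of_lt_of_le hb hu.1)).continuousAt).continuousWithinAt
          · intro u hu
            rw [interior_Icc] at hu
            exact ((hderiv u (hb.trans hu.1)).differentiableAt).differentiableWithinAt
          · intro u hu
            rw [interior_Icc] at hu
            rw [(hderiv u (hb.trans hu.1)).deriv]
            exact hmid u hu.1.le hu.2.le
        have := hmono (Set.left_mem_Icc.mpr (hbt.trans htc)) (Set.mem_Icc.mpr ⟨hbt, htc⟩) hbt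
        rw [hQb] at this; exact this
      · have hanti : AntitoneOn Q (Icc c a) := by
          apply antitoneOn_of_deriv_nonpos (convex_Icc c a)
          · exact fun u hu => ((hderiv u (hcpos.trans_le hu.1)).continuousAt).continuousWithinAt
          · intro u hu
            rw [interior_Icc] at hu
            exact ((hderiv u (hcpos.trans hu.1)).differentiableAt).differentiableWithinAt
          · intro u hu
            rw [interior_Icc] at hu
            rw [(hderiv u (hcpos.trans hu.1)).deriv]
            exact hhi u hu.1.le
        have := hanti (Set.mem_Icc.mpr ⟨hct, hta⟩) (Set.right_mem_Icc.mpr (hct.trans hta)) hta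
        rw [hQa] at this; exact this
  simp only [hQ] at hQt
  linarith

/-- Shannon entropy of a vector, with the convention `0 * log 0 = 0`
(automatic since `Real.log 0 = 0`). -/
noncomputable def shannonEntropy {d : ℕ} (x : Fin d → ℝ) : ℝ :=
  -∑ i, x i * Real.log (x i)

/-- Among d-dimensional probability vectors of purity γ, Shannon entropy is maximized
by the vector `(x₁, (1-x₁)/(d-1), …, (1-x₁)/(d-1))` with
`x₁ = 1/d + √((d-1)/d (γ - 1/d))`. -/
theorem entropy_max_at_fixed_purity (d : ℕ) (hd : 2 ≤ d) (γ : ℝ)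
    (hγ₁ : 1 / (d : ℝ) ≤ γ) (hγ₂ : γ ≤ 1) :
    let a : ℝ := 1 / d + Real.sqrt ((d - 1) / d * (γ - 1 / d))
    let y : Fin d → ℝ := fun i => if i = ⟨0, by omega⟩ then a else (1 - a) / (d - 1)
    ((∀ i, 0 ≤ y i) ∧ ∑ i, y i = 1 ∧ ∑ i, (y i) ^ 2 = γ) ∧
    ∀ x : Fin d → ℝ, (∀ i, 0 ≤ x i) → ∑ i, x i = 1 → ∑ i, (x i) ^ 2 = γ →
      shannonEntropy x ≤ shannonEntropy y := by
  intro a y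
  have hd2 : (2:ℝ) ≤ (d:ℝ) := by exact_mod_cast hd
  have hdpos : (0:ℝ) < (d:ℝ) := by linarith
  have hd1 : (0:ℝ) < (d:ℝ) - 1 := by linarith
  have ha_def : a = 1 / (d:ℝ) + Real.sqrt (((d:ℝ) - 1) / d * (γ - 1 / d)) := rfl
  set s : ℝ := Real.sqrt (((d:ℝ) - 1) / d * (γ - 1 / d)) with hs
  have harg : 0 ≤ ((d:ℝ) - 1) / d * (γ - 1 / d) :=
    mul_nonneg (by positivity) (by linarith)
  have hs0 : 0 ≤ s := Real.sqrt_nonneg _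
  have hs2 : s ^ 2 = ((d:ℝ) - 1) / d * (γ - 1 / d) := Real.sq_sqrt harg
  have hfrac : ((d:ℝ) - 1) / d = 1 - 1 / d := by field_simp
  have hsle : s ≤ ((d:ℝ) - 1) / d := by
    have hX : ((d:ℝ) - 1) / d * (γ - 1 / d) ≤ (((d:ℝ) - 1) / d) ^ 2 := by
      have h1 : γ - 1 / (d:ℝ) ≤ ((d:ℝ) - 1) / d := by rw [hfrac]; linarith
      nlinarith [h1, harg, (by positivity : (0:ℝ) ≤ ((d:ℝ) - 1) / d)]
    calc s ≤ Real.sqrt ((((d:ℝ) - 1) / d) ^ 2) := Real.sqrt_le_sqrt hX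
      _ = ((d:ℝ) - 1) / d := Real.sqrt_sq (by positivity)
  have ha_low : 1 / (d:ℝ) ≤ a := by rw [ha_def]; linarith
  have ha1 : a ≤ 1 := by rw [ha_def]; rw [hfrac] at hsle; linarith
  have ha_pos : 0 < a := lt_of_lt_of_le (by positivity) ha_low
  set b : ℝ := (1 - a) / ((d:ℝ) - 1) with hbdef
  have hb0 : 0 ≤ b := div_nonneg (by linarith) (by linarith)
  have hb_eq : b * ((d:ℝ) - 1) = 1 - a := by rw [hbdef]; field_simp
  have hab_sum : a + ((d:ℝ) - 1) * b = 1 := by nlinarith [hb_eq]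
  have hds2 : (d:ℝ) ^ 2 * s ^ 2 = d * ((d:ℝ) - 1) * γ - ((d:ℝ) - 1) := by
    rw [hs2]; field_simp
  have hda : (d:ℝ) * a = 1 + d * s := by rw [ha_def]; field_simp
  have hsq_y : a ^ 2 + ((d:ℝ) - 1) * b ^ 2 = γ := by
    have h1 : (b * ((d:ℝ) - 1)) ^ 2 = (1 - a) ^ 2 := by rw [hb_eq]
    have h2 : ((d:ℝ) * a) ^ 2 = (1 + d * s) ^ 2 := by rw [hda]
    -- multiply the goal by d^2 (d-1)
    have h3 : ((d:ℝ) ^ 2 * ((d:ℝ) - 1)) * (a ^ 2 + ((d:ℝ) - 1) * b ^ 2)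
        = ((d:ℝ) ^ 2 * ((d:ℝ) - 1)) * γ := by nlinarith [h1, h2, hds2]
    have h4 : ((d:ℝ) ^ 2 * ((d:ℝ) - 1)) ≠ 0 := by positivity
    exact mul_left_cancel₀ h4 h3
  set i₀ : Fin d := ⟨0, by omega⟩ with hi₀
  have hy : ∀ i : Fin d, y i = if i = i₀ then a else b := fun i => rfl
  have hsplit : ∀ F : ℝ → ℝ, ∑ i, F (y i) = F a + ((d:ℝ) - 1) * F b := by
    intro F
    have h0 : ∀ i : Fin d, F (y i) = if i = i₀ then F a else F b := fun i => by
      rw [hy i]; exact apply_ite F _ _ _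
    rw [Finset.sum_congr rfl fun i _ => h0 i]
    rw [← Finset.add_sum_erase Finset.univ _ (Finset.mem_univ i₀), if_pos rfl]
    congr 1
    rw [Finset.sum_congr rfl fun i hi => if_neg (Finset.ne_of_mem_erase hi)]
    rw [Finset.sum_const, Finset.card_erase_of_mem (Finset.mem_univ _), Finset.card_univ,
      Fintype.card_fin, nsmul_eq_mul, Nat.cast_sub (by omega : 1 ≤ d), Nat.cast_one]
  have hy_nonneg : ∀ i, 0 ≤ y i := by
    intro i; rw [hy i]; split
    · exact ha_pos.le
    · exact hb0
  have hy_sum : ∑ i, y i = 1 := by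
    have h := hsplit (fun t => t)
    simpa using h.trans hab_sum
  have hy_sq : ∑ i, (y i) ^ 2 = γ := by
    have h := hsplit (fun t => t ^ 2)
    simpa using h.trans hsq_y
  refine ⟨⟨hy_nonneg, hy_sum, hy_sq⟩, ?_⟩
  intro x hx hx1 hx2
  -- every coordinate of x is at most a
  have hxa : ∀ i, x i ≤ a := by
    intro i
    have he1 : x i + ∑ j ∈ Finset.univ.erase i, x j = 1 := by
      rw [Finset.add_sum_erase Finset.univ _ (Finset.mem_univ i)]; exact hx1
    have he2 : (x i) ^ 2 + ∑ j ∈ Finset.univ.erase i, (x j) ^ 2 = γ := by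
      rw [Finset.add_sum_erase Finset.univ (fun j => (x j) ^ 2) (Finset.mem_univ i)]; exact hx2
    have hcs : (∑ j ∈ Finset.univ.erase i, x j) ^ 2
        ≤ ((d:ℝ) - 1) * ∑ j ∈ Finset.univ.erase i, (x j) ^ 2 := by
      have h := sq_sum_le_card_mul_sum_sq (s := Finset.univ.erase i) (f := x)
      have hcard : ((Finset.univ.erase i).card : ℝ) = (d:ℝ) - 1 := by
        rw [Finset.card_erase_of_mem (Finset.mem_univ _), Finset.card_univ, Fintype.card_fin,
          Nat.cast_sub (by omega : 1 ≤ d), Nat.cast_one]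
      rw [← hcard]
      exact_mod_cast h
    have h2' : (1 - x i) ^ 2 ≤ ((d:ℝ) - 1) * (γ - (x i) ^ 2) := by
      have e1 : ∑ j ∈ Finset.univ.erase i, x j = 1 - x i := by linarith
      have e2 : ∑ j ∈ Finset.univ.erase i, (x j) ^ 2 = γ - (x i) ^ 2 := by linarith
      rw [e1, e2] at hcs; exact hcs
    have h3 : ((d:ℝ) * x i - 1) ^ 2 ≤ ((d:ℝ) * s) ^ 2 := by
      nlinarith [mul_le_mul_of_nonneg_left h2' hdpos.le, hds2]
    have h4 : (d:ℝ) * x i - 1 ≤ (d:ℝ) * s := by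
      nlinarith [h3, mul_nonneg hdpos.le hs0, sq_nonneg ((d:ℝ) * x i - 1 + (d:ℝ) * s)]
    nlinarith [h4, hda, hdpos]
  rcases eq_or_lt_of_le hγ₁ with hA | hγ1'
  · -- γ = 1/d : x must be uniform, equal to y
    have hzero : ((d:ℝ) - 1) / d * (γ - 1 / d) = 0 := by rw [← hA]; ring
    have hs0' : s = 0 := by rw [hs, hzero, Real.sqrt_zero]
    have haA : a = 1 / (d:ℝ) := by rw [ha_def, hs0']; ring
    have hbA : b = 1 / (d:ℝ) := by
      rw [hbdef, haA, div_eq_iff (by linarith : ((d:ℝ) - 1) ≠ 0)]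
      field_simp
    have hsumsq : ∑ i, (x i - 1 / (d:ℝ)) ^ 2 = 0 := by
      have e : ∀ i : Fin d, (x i - 1 / (d:ℝ)) ^ 2
          = (x i) ^ 2 + ((-2 / d) * x i + 1 / (d:ℝ) ^ 2) := fun i => by ring
      rw [Finset.sum_congr rfl fun i _ => e i, Finset.sum_add_distrib, hx2,
        Finset.sum_add_distrib, ← Finset.mul_sum, hx1, Finset.sum_const, Finset.card_univ,
        Fintype.card_fin, nsmul_eq_mul, ← hA]
      field_simp
      ring
    have hxall : ∀ i, x i = 1 / (d:ℝ) := by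
      intro i
      have h := (Finset.sum_eq_zero_iff_of_nonneg (fun j _ => sq_nonneg _)).mp hsumsq i
        (Finset.mem_univ i)
      have := pow_eq_zero_iff (n := 2) (by norm_num) |>.mp h
      linarith [this]
    have hxy : x = y := by
      funext i; rw [hxall i, hy i]
      split
      · rw [haA]
      · rw [hbA]
    rw [hxy]
  rcases eq_or_lt_of_le hγ₂ with hB | hγ2'
  · -- γ = 1 : both entropies are 0
    have hsB : s = ((d:ℝ) - 1) / d := by
      rw [hs, hB, show ((d:ℝ) - 1) / d * (1 - 1 / d) = (((d:ℝ) - 1) / d) ^ 2 by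
        rw [hfrac]; ring]
      exact Real.sqrt_sq (by positivity)
    have haB : a = 1 := by rw [ha_def, hsB, hfrac]; ring
    have hbB : b = 0 := by rw [hbdef, haB]; simp
    have hHy : shannonEntropy y = 0 := by
      show -∑ i, y i * Real.log (y i) = 0
      rw [hsplit (fun t => t * Real.log t), haB, hbB]
      simp
    have hxle : ∀ i, x i ≤ 1 := by
      intro i
      calc x i ≤ ∑ j, x j := Finset.single_le_sum (fun j _ => hx j) (Finset.mem_univ i)
        _ = 1 := hx1
    have hsum0 : ∑ i, x i * (1 - x i) = 0 := by
      have e : ∀ i : Fin d, x i * (1 - x i) = x i - (x i) ^ 2 := fun i => by ring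
      rw [Finset.sum_congr rfl fun i _ => e i, Finset.sum_sub_distrib, hx1, hx2, hB, sub_self]
    have hx01 : ∀ i, x i * Real.log (x i) = 0 := by
      intro i
      have h := (Finset.sum_eq_zero_iff_of_nonneg
        (fun j _ => mul_nonneg (hx j) (by linarith [hxle j]))).mp hsum0 i (Finset.mem_univ i)
      rcases mul_eq_zero.mp h with h | h
      · rw [h, zero_mul]
      · have : x i = 1 := by linarith
        rw [this, Real.log_one, mul_zero]
    have hHx : shannonEntropy x = 0 := by
      show -∑ i, x i * Real.log (x i) = 0
      rw [Finset.sum_congr rfl fun i _ => hx01 i, Finset.sum_const, smul_zero, neg_zero]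
    rw [hHx, hHy]
  -- main case : 1/d < γ < 1
  have hspos : 0 < s := Real.sqrt_pos.mpr (mul_pos (by positivity) (by linarith))
  have halt1 : a < 1 := by
    have hslt : s < ((d:ℝ) - 1) / d := by
      have hX : ((d:ℝ) - 1) / d * (γ - 1 / d) < (((d:ℝ) - 1) / d) ^ 2 := by
        have h1 : γ - 1 / (d:ℝ) < ((d:ℝ) - 1) / d := by rw [hfrac]; linarith
        nlinarith [h1, (by positivity : (0:ℝ) < ((d:ℝ) - 1) / d)]
      calc s < Real.sqrt ((((d:ℝ) - 1) / d) ^ 2) := (Real.sqrt_lt_sqrt harg hX)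
        _ = ((d:ℝ) - 1) / d := Real.sqrt_sq (by positivity)
    rw [ha_def]; rw [hfrac] at hslt; linarith
  have hbpos : 0 < b := div_pos (by linarith) hd1
  have hba : b < a := by
    rw [hbdef, div_lt_iff₀ hd1]
    nlinarith [hda, mul_pos hdpos hspos]
  set C : ℝ := (a * Real.log a - a * Real.log b - a + b) / (a - b) ^ 2 with hCdef
  have hkey : ∀ i, -(x i * Real.log (x i))
      ≤ -(x i * Real.log b) - x i + b - C * (x i - b) ^ 2 :=
    fun i => key_ineq hbpos hba (x i) (hx i) (hxa i)
  have hval : ∀ z : Fin d → ℝ, (∑ i, z i) = 1 → (∑ i, (z i) ^ 2) = γ →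
      ∑ i, (-(z i * Real.log b) - z i + b - C * (z i - b) ^ 2)
        = (-(Real.log b) - 1 + 2 * C * b) + (d:ℝ) * (b - C * b ^ 2) + (-C) * γ := by
    intro z h1 h2
    have e : ∀ i : Fin d, -(z i * Real.log b) - z i + b - C * (z i - b) ^ 2
        = ((-(Real.log b) - 1 + 2 * C * b) * z i + (b - C * b ^ 2)) + (-C) * (z i) ^ 2 :=
      fun i => by ring
    rw [Finset.sum_congr rfl fun i _ => e i, Finset.sum_add_distrib, Finset.sum_add_distrib,
      ← Finset.mul_sum, ← Finset.mul_sum, h1, h2, Finset.sum_const, Finset.card_univ,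
      Fintype.card_fin, nsmul_eq_mul]
    ring
  have hqa : -(a * Real.log b) - a + b - C * (a - b) ^ 2 = -(a * Real.log a) := by
    have hab2 : ((a - b) ^ 2 : ℝ) ≠ 0 := pow_ne_zero _ (sub_ne_zero.mpr (ne_of_gt hba))
    rw [hCdef, div_mul_cancel₀ _ hab2]; ring
  have hqb : -(b * Real.log b) - b + b - C * (b - b) ^ 2 = -(b * Real.log b) := by ring
  have hqy : ∑ i, (-(y i * Real.log b) - y i + b - C * (y i - b) ^ 2) = shannonEntropy y := by
    rw [hsplit (fun t => -(t * Real.log b) - t + b - C * (t - b) ^ 2), hqa, hqb]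
    show _ = -∑ i, y i * Real.log (y i)
    rw [hsplit (fun t => t * Real.log t)]
    ring
  calc shannonEntropy x = ∑ i, -(x i * Real.log (x i)) := by
        show -∑ i, x i * Real.log (x i) = _
        rw [Finset.sum_neg_distrib]
    _ ≤ ∑ i, (-(x i * Real.log b) - x i + b - C * (x i - b) ^ 2) :=
        Finset.sum_le_sum fun i _ => hkey i
    _ = (-(Real.log b) - 1 + 2 * C * b) + (d:ℝ) * (b - C * b ^ 2) + (-C) * γ := hval x hx1 hx2
    _ = ∑ i, (-(y i * Real.log b) - y i + b - C * (y i - b) ^ 2) := (hval y hy_sum hy_sq).symm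
    _ = shannonEntropy y := hqy
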